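/- For any non-negative integer n, \sum over all permutations \sigma of {1, ..., n} of (-1)^{p_-(\sigma)} * C(p_-(\sigma), \lfloor n/2 \rfloor - p_-(\sigma)) = 4^{\lfloor n/2 \rfloor}. -/

import Mathlib

/-- The bivariate Catalan number `C(m, n) = (2m)! (2n)! / (m! (m+n)! n!)`, as a rational. -/
def bivariateCatalan (m n : ℕ) : ℚ :=
  ((2 * m).factorial * (2 * n).factorial : ℚ) /
    (m.factorial * (m + n).factorial * n.factorial)

/-- The value `σ(i)` of a permutation `σ` of `{1, ..., n}` at a position `1 ≤ i ≤ n`,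
with the convention that the value is `0` outside this range (in particular `σ(0) = 0`). -/
def permVal (n : ℕ) (σ : Equiv.Perm (Fin n)) (i : ℕ) : ℕ :=
  if h : 1 ≤ i ∧ i ≤ n then ((σ ⟨i - 1, by omega⟩ : Fin n) : ℕ) + 1 else 0

/-- The number of interior peaks of a permutation `σ` of `{1, ..., n}`:
indices `2 ≤ i ≤ n-1` with `σ(i-1) < σ(i) > σ(i+1)`. -/
def interiorPeaks (n : ℕ) (σ : Equiv.Perm (Fin n)) : ℕ :=
  ((Finset.Icc 2 (n - 1)).filter
    (fun i => permVal n σ (i - 1) < permVal n σ i ∧ permVal n σ (i + 1) < permVal n σ i)).card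

/-- The number of augmented peaks of a permutation `σ` of `{1, ..., n}`:
indices `1 ≤ i ≤ n-1` with `σ(i-1) < σ(i) > σ(i+1)`, with the convention `σ(0) = 0`. -/
def augmentedPeaks (n : ℕ) (σ : Equiv.Perm (Fin n)) : ℕ :=
  ((Finset.Icc 1 (n - 1)).filter
    (fun i => permVal n σ (i - 1) < permVal n σ i ∧ permVal n σ (i + 1) < permVal n σ i)).card


def ins (n : ℕ) (j : Fin (n+1)) (τ : Equiv.Perm (Fin n)) : Equiv.Perm (Fin (n+1)) :=
  (finSuccEquiv' j).trans ((Equiv.optionCongr τ).trans (finSuccEquiv' (Fin.last n)).symm)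

lemma ins_apply_self (n : ℕ) (j : Fin (n+1)) (τ : Equiv.Perm (Fin n)) :
    ins n j τ j = Fin.last n := by
  simp [ins, finSuccEquiv'_at, finSuccEquiv'_symm_none]

lemma ins_apply_succAbove (n : ℕ) (j : Fin (n+1)) (τ : Equiv.Perm (Fin n)) (k : Fin n) :
    ins n j τ (j.succAbove k) = (τ k).castSucc := by
  simp [ins, finSuccEquiv'_succAbove, finSuccEquiv'_symm_some, Fin.succAbove_last]

lemma permVal_le (n : ℕ) (σ : Equiv.Perm (Fin n)) (i : ℕ) : permVal n σ i ≤ n := by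
  unfold permVal
  split
  · exact (σ _).isLt
  · omega

lemma permVal_ins (n : ℕ) (j : Fin (n+1)) (τ : Equiv.Perm (Fin n)) (i : ℕ) :
    permVal (n+1) (ins n j τ) i =
      if i < (j : ℕ) + 1 then permVal n τ i
      else if i = (j : ℕ) + 1 then n + 1
      else permVal n τ (i - 1) := by
  have hj := j.isLt
  rcases Nat.lt_or_ge i 1 with hi | hi
  · interval_cases i
    simp [permVal]
  rcases Nat.lt_or_ge (n+1) i with hbig | hle
  · -- i > n+1 : both sides 0
    rw [permVal, dif_neg (by omega)]
    rw [if_neg (by omega), if_neg (by omega), permVal, dif_neg (by omega)]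
  -- 1 ≤ i ≤ n+1
  rw [permVal, dif_pos ⟨hi, hle⟩]
  rcases Nat.lt_trichotomy (i-1) (j : ℕ) with hlt | heq | hgt
  · -- i - 1 < j
    have hin : i - 1 < n := by omega
    have : (⟨i-1, by omega⟩ : Fin (n+1)) = j.succAbove ⟨i-1, hin⟩ := by
      rw [Fin.succAbove_of_castSucc_lt]
      · rfl
      · exact hlt
    rw [this, ins_apply_succAbove]
    rw [if_pos (by omega), permVal, dif_pos ⟨hi, by omega⟩]
    rfl
  · have : (⟨i-1, by omega⟩ : Fin (n+1)) = j := by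
      exact Fin.ext heq
    rw [this, ins_apply_self]
    rw [if_neg (by omega), if_pos (by omega)]
    rfl
  · -- i - 1 > j
    have hin : i - 2 < n := by omega
    have : (⟨i-1, by omega⟩ : Fin (n+1)) = j.succAbove ⟨i-2, hin⟩ := by
      rw [Fin.succAbove_of_le_castSucc]
      · exact Fin.ext (by simp [Fin.val_succ]; omega)
      · simp [Fin.le_def]; omega
    rw [this, ins_apply_succAbove]
    rw [if_neg (by omega), if_neg (by omega), permVal, dif_pos ⟨by omega, by omega⟩]
    rfl

lemma ins_injective (n : ℕ) : Function.Injective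
    (fun x : Fin (n+1) × Equiv.Perm (Fin n) => ins n x.1 x.2) := by
  rintro ⟨j, τ⟩ ⟨j', τ'⟩ h
  simp only at h
  have hlast : ∀ (j : Fin (n+1)) (τ : Equiv.Perm (Fin n)) (i : Fin (n+1)),
      ins n j τ i = Fin.last n → i = j := by
    intro j τ i hi
    by_contra hne
    obtain ⟨k, hk⟩ := Fin.exists_succAbove_eq hne
    rw [← hk, ins_apply_succAbove] at hi
    exact absurd hi (Fin.castSucc_lt_last _).ne
  have hj : j = j' := by
    have := hlast j' τ' j (by rw [← h, ins_apply_self])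
    omega
  subst hj
  have hτ : τ = τ' := by
    ext k
    have h1 := ins_apply_succAbove n j τ k
    have h2 := ins_apply_succAbove n j τ' k
    rw [h, h2] at h1
    exact congrArg Fin.val (Fin.castSucc_injective _ h1.symm)
  simp [hτ]

lemma ins_bijective (n : ℕ) : Function.Bijective
    (fun x : Fin (n+1) × Equiv.Perm (Fin n) => ins n x.1 x.2) := by
  rw [Fintype.bijective_iff_injective_and_card]
  refine ⟨ins_injective n, ?_⟩
  simp [Fintype.card_perm, Nat.factorial_succ]

def PeakAt (f : ℕ → ℕ) (i : ℕ) : Prop := f (i-1) < f i ∧ f (i+1) < f i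

instance (f : ℕ → ℕ) (i : ℕ) : Decidable (PeakAt f i) := by unfold PeakAt; infer_instance

lemma interiorPeaks_eq (n : ℕ) (σ : Equiv.Perm (Fin n)) :
    interiorPeaks n σ = ((Finset.Icc 2 (n-1)).filter (PeakAt (permVal n σ))).card := rfl

section
variable (n : ℕ) (j : Fin (n+1)) (τ : Equiv.Perm (Fin n))

-- the peak set of τ
def pkS : Finset ℕ := (Finset.Icc 2 (n-1)).filter (PeakAt (permVal n τ))

lemma pkS_mem {i : ℕ} (h : i ∈ pkS n τ) : 2 ≤ i ∧ i ≤ n - 1 ∧ PeakAt (permVal n τ) i := by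
  unfold pkS at h
  simp only [Finset.mem_filter, Finset.mem_Icc] at h
  tauto

lemma pkS_not_adjacent {i : ℕ} (h : i ∈ pkS n τ) : i + 1 ∉ pkS n τ := by
  intro h'
  obtain ⟨-, -, -, h1⟩ := pkS_mem n τ h
  obtain ⟨-, -, h2, -⟩ := pkS_mem n τ h'
  simp at h2
  omega
end

section
variable (n : ℕ) (j : Fin (n+1)) (τ : Equiv.Perm (Fin n))

lemma mem_pkS_ins (i : ℕ) :
    i ∈ pkS (n+1) (ins n j τ) ↔
      (i + 2 ≤ (j:ℕ) + 1 ∧ i ∈ pkS n τ) ∨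
      (i = (j:ℕ) + 1 ∧ 2 ≤ (j:ℕ) + 1 ∧ (j:ℕ) + 1 ≤ n) ∨
      ((j:ℕ) + 3 ≤ i ∧ i ≤ n ∧ i - 1 ∈ pkS n τ) := by
  set p := (j : ℕ) + 1 with hp
  have hj := j.isLt
  have hW := permVal_ins n j τ
  have hle := permVal_le n τ
  unfold pkS
  simp only [Finset.mem_filter, Finset.mem_Icc, PeakAt]
  constructor
  · rintro ⟨⟨h2, hn⟩, ha, hb⟩
    simp only [hW] at ha hb
    rcases Nat.lt_trichotomy i p with hlt | heq | hgt
    · rw [if_pos (show i - 1 < p by omega), if_pos (show i < p by omega)] at ha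
      rcases Nat.lt_or_ge (i+1) p with h1 | h1
      · rw [if_pos (show i + 1 < p by omega), if_pos (show i < p by omega)] at hb
        exact Or.inl ⟨by omega, ⟨by omega, by omega⟩, ha, hb⟩
      · rw [if_neg (show ¬ i + 1 < p by omega), if_pos (show i + 1 = p by omega),
          if_pos (show i < p by omega)] at hb
        have := hle i; omega
    · exact Or.inr (Or.inl ⟨heq, by omega, by omega⟩)
    · rw [if_neg (show ¬ i + 1 < p by omega), if_neg (show ¬ i + 1 = p by omega),
        if_neg (show ¬ i < p by omega), if_neg (show ¬ i = p by omega)] at hb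
      rcases Nat.eq_or_lt_of_le hgt with heq1 | hgt1
      · rw [if_neg (show ¬ i - 1 < p by omega), if_pos (show i - 1 = p by omega),
          if_neg (show ¬ i < p by omega), if_neg (show ¬ i = p by omega)] at ha
        have := hle (i-1); omega
      · rw [if_neg (show ¬ i - 1 < p by omega), if_neg (show ¬ i - 1 = p by omega),
          if_neg (show ¬ i < p by omega), if_neg (show ¬ i = p by omega)] at ha
        refine Or.inr (Or.inr ⟨by omega, by omega, ⟨by omega, by omega⟩, ?_, ?_⟩)
        · rw [show i - 1 - 1 = i - 1 - 1 from rfl]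
          rw [show (i : ℕ) - 1 - 1 = i - 1 - 1 from rfl]
          have e : i - 1 - 1 = i - 1 - 1 := rfl
          convert ha using 2 <;> omega
        · have e : i - 1 + 1 = i := by omega
          rw [e]; exact hb
  · rintro (⟨hip, ⟨⟨h2, hn⟩, ha, hb⟩⟩ | ⟨heq, h2, hn⟩ | ⟨hgt, hin, ⟨⟨h2, hn⟩, ha, hb⟩⟩)
    · refine ⟨⟨h2, by omega⟩, ?_, ?_⟩ <;> simp only [hW]
      · rw [if_pos (show i - 1 < p by omega), if_pos (show i < p by omega)]; exact ha
      · rw [if_pos (show i + 1 < p by omega), if_pos (show i < p by omega)]; exact hb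
    · subst heq
      refine ⟨⟨h2, by omega⟩, ?_, ?_⟩ <;> simp only [hW]
      · rw [if_pos (show p - 1 < p by omega), if_neg (show ¬ p < p by omega), if_pos hp]
        have := hle (p - 1); omega
      · rw [if_neg (show ¬ p + 1 < p by omega), if_neg (show ¬ p + 1 = p by omega),
          if_neg (show ¬ p < p by omega), if_pos hp]
        have := hle (p + 1 - 1); omega
    · refine ⟨⟨by omega, by omega⟩, ?_, ?_⟩ <;> simp only [hW]
      · rw [if_neg (show ¬ i - 1 < p by omega), if_neg (show ¬ i - 1 = p by omega),
          if_neg (show ¬ i < p by omega), if_neg (show ¬ i = p by omega)]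
        convert ha using 2 <;> omega
      · rw [if_neg (show ¬ i + 1 < p by omega), if_neg (show ¬ i + 1 = p by omega),
          if_neg (show ¬ i < p by omega), if_neg (show ¬ i = p by omega)]
        have e2 : i + 1 - 1 = i := by omega
        have e3 : i - 1 + 1 = i := by omega
        rw [e2]
        rw [e3] at hb; exact hb
end

section
variable (n : ℕ) (j : Fin (n+1)) (τ : Equiv.Perm (Fin n))

lemma pkS_ins_card :
    (pkS (n+1) (ins n j τ)).card =
      if (j:ℕ) + 1 = 1 ∨ (j:ℕ) + 1 = n + 1 ∨ (j:ℕ) ∈ pkS n τ ∨ (j:ℕ) + 1 ∈ pkS n τ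
      then (pkS n τ).card else (pkS n τ).card + 1 := by
  set p := (j : ℕ) + 1 with hp
  have hj := j.isLt
  set S := pkS n τ with hS
  set A := S.filter (fun i => i + 2 ≤ p) with hA
  set B := S.filter (fun i => p + 1 ≤ i) with hB
  set M := S.filter (fun i => i = p - 1 ∨ i = p) with hM
  have memS : ∀ {i}, i ∈ S → 2 ≤ i ∧ i ≤ n - 1 := fun h => ⟨(pkS_mem n τ h).1, (pkS_mem n τ h).2.1⟩
  -- decomposition of S
  have hScard : S.card = A.card + B.card + M.card := by
    have hdecomp : S = (A ∪ B) ∪ M := by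
      ext i
      simp only [hA, hB, hM, Finset.mem_union, Finset.mem_filter]
      constructor
      · intro h
        have h2 := (memS h).1
        by_cases hc : i + 2 ≤ p
        · exact Or.inl (Or.inl ⟨h, hc⟩)
        · by_cases hc2 : p + 1 ≤ i
          · exact Or.inl (Or.inr ⟨h, hc2⟩)
          · exact Or.inr ⟨h, by omega⟩
      · rintro ((⟨h, -⟩ | ⟨h, -⟩) | ⟨h, -⟩) <;> exact h
    have d1 : Disjoint A B := by
      rw [Finset.disjoint_left]
      intro a ha hb
      simp only [hA, hB, Finset.mem_filter] at ha hb
      omega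
    have d2 : Disjoint (A ∪ B) M := by
      rw [Finset.disjoint_left]
      intro a ha hm
      simp only [hA, hB, hM, Finset.mem_union, Finset.mem_filter] at ha hm
      have := (memS hm.1).1
      omega
    rw [hdecomp, Finset.card_union_of_disjoint d2, Finset.card_union_of_disjoint d1]
  -- decomposition of new peak set
  set Pp := (if 2 ≤ p ∧ p ≤ n then ({p} : Finset ℕ) else ∅) with hPp
  have hmemPp : ∀ {i}, i ∈ Pp ↔ (i = p ∧ 2 ≤ p ∧ p ≤ n) := by
    intro i
    rw [hPp]
    split
    · simp only [Finset.mem_singleton]; tauto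
    · simp only [Finset.notMem_empty, false_iff]; tauto
  have hnew : pkS (n+1) (ins n j τ) = (A ∪ B.image (· + 1)) ∪ Pp := by
    ext i
    rw [mem_pkS_ins]
    simp only [hA, hB, Finset.mem_union, Finset.mem_filter, Finset.mem_image, hmemPp]
    constructor
    · rintro (⟨h1, h2⟩ | ⟨h1, h2, h3⟩ | ⟨h1, h2, h3⟩)
      · exact Or.inl (Or.inl ⟨h2, h1⟩)
      · exact Or.inr ⟨h1, h2, h3⟩
      · refine Or.inl (Or.inr ⟨i - 1, ⟨h3, by omega⟩, by omega⟩)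
    · rintro ((⟨h1, h2⟩ | ⟨a, ⟨ha, hpa⟩, rfl⟩) | ⟨h1, h2, h3⟩)
      · exact Or.inl ⟨h2, h1⟩
      · have := memS ha
        exact Or.inr (Or.inr ⟨by omega, by omega, by simpa using ha⟩)
      · exact Or.inr (Or.inl ⟨h1, h2, h3⟩)
  have hBimg : (B.image (· + 1)).card = B.card :=
    Finset.card_image_of_injective _ (fun a b h => by omega)
  have hnewcard : (pkS (n+1) (ins n j τ)).card = A.card + B.card + Pp.card := by
    have d1 : Disjoint A (B.image (· + 1)) := by
      rw [Finset.disjoint_left]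
      intro a ha hb
      simp only [hA, hB, Finset.mem_filter, Finset.mem_image] at ha hb
      obtain ⟨b, ⟨-, hb1⟩, hb2⟩ := hb
      omega
    have d2 : Disjoint (A ∪ B.image (· + 1)) Pp := by
      rw [Finset.disjoint_left]
      intro a ha hm
      rw [hmemPp] at hm
      simp only [hA, hB, Finset.mem_union, Finset.mem_filter, Finset.mem_image] at ha
      rcases ha with ⟨-, h⟩ | ⟨b, ⟨-, hb1⟩, hb2⟩ <;> omega
    rw [hnew, Finset.card_union_of_disjoint d2, Finset.card_union_of_disjoint d1, hBimg]
  by_cases hgood : p = 1 ∨ p = n + 1 ∨ (j:ℕ) ∈ S ∨ p ∈ S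
  · rw [if_pos hgood]
    -- show Pp.card = M.card
    have : Pp.card = M.card := by
      rcases hgood with h | h | h | h
      · -- p = 1 : M = ∅, Pp = ∅
        have hM0 : M = ∅ := by
          rw [Finset.eq_empty_iff_forall_notMem]
          intro a ha
          simp only [hM, Finset.mem_filter] at ha
          have := memS ha.1; omega
        have hP0 : Pp = ∅ := by
          rw [Finset.eq_empty_iff_forall_notMem]
          intro a ha
          rw [hmemPp] at ha; omega
        rw [hM0, hP0]
      · -- p = n+1 : need to show M = ∅ and Pp = ∅
        have hM0 : M = ∅ := by
          rw [Finset.eq_empty_iff_forall_notMem]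
          intro a ha
          simp only [hM, Finset.mem_filter] at ha
          have := memS ha.1; omega
        have hP0 : Pp = ∅ := by
          rw [Finset.eq_empty_iff_forall_notMem]
          intro a ha
          rw [hmemPp] at ha; omega
        rw [hM0, hP0]
      · -- j = p - 1 ∈ S
        have hb := memS h
        have hnp : p ∉ S := by
          intro hc
          exact pkS_not_adjacent n τ (by simpa using h) (by simpa using hc)
        have hMe : M = {(j:ℕ)} := by
          ext a
          simp only [hM, Finset.mem_filter, Finset.mem_singleton]
          constructor
          · rintro ⟨ha, h1 | h1⟩
            · omega
            · exact absurd (h1 ▸ ha) hnp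
          · rintro rfl; exact ⟨h, by omega⟩
        have hPe : Pp = {p} := by
          rw [hPp, if_pos ⟨by omega, by omega⟩]
        rw [hMe, hPe]; simp
      · -- p ∈ S
        have hb := memS h
        have hnj : (j:ℕ) ∉ S := by
          intro hc
          exact pkS_not_adjacent n τ hc (by simpa using h)
        have hMe : M = {p} := by
          ext a
          simp only [hM, Finset.mem_filter, Finset.mem_singleton]
          constructor
          · rintro ⟨ha, h1 | h1⟩
            · exact absurd (by rw [h1, hp, Nat.add_sub_cancel] at ha; exact ha : (j:ℕ) ∈ S) hnj
            · exact h1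
          · rintro rfl; exact ⟨h, by omega⟩
        have hPe : Pp = {p} := by
          rw [hPp, if_pos ⟨by omega, by omega⟩]
        rw [hMe, hPe]
    omega
  · rw [if_neg hgood]
    push_neg at hgood
    obtain ⟨hg1, hg2, hg3, hg4⟩ := hgood
    have hM0 : M = ∅ := by
      rw [Finset.eq_empty_iff_forall_notMem]
      intro a ha
      simp only [hM, Finset.mem_filter] at ha
      rcases ha.2 with h1 | h1
      · exact hg3 (by rw [show (j:ℕ) = a by omega]; exact ha.1)
      · exact hg4 (h1 ▸ ha.1)
    have hP1 : Pp = {p} := by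
      rw [hPp, if_pos ⟨by omega, by omega⟩]
    rw [hnewcard, hP1, hScard, hM0]
    simp
end

lemma good_card (n : ℕ) (hn : 1 ≤ n) (τ : Equiv.Perm (Fin n)) :
    (Finset.univ.filter (fun j : Fin (n+1) =>
      (j:ℕ) + 1 = 1 ∨ (j:ℕ) + 1 = n + 1 ∨ (j:ℕ) ∈ pkS n τ ∨ (j:ℕ) + 1 ∈ pkS n τ)).card
      = 2 * (pkS n τ).card + 2 := by
  set S := pkS n τ with hS
  have memS : ∀ {i}, i ∈ S → 2 ≤ i ∧ i ≤ n - 1 := fun h => ⟨(pkS_mem n τ h).1, (pkS_mem n τ h).2.1⟩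
  set G := Finset.univ.filter (fun j : Fin (n+1) =>
      (j:ℕ) + 1 = 1 ∨ (j:ℕ) + 1 = n + 1 ∨ (j:ℕ) ∈ S ∨ (j:ℕ) + 1 ∈ S) with hG
  set T := insert 1 (insert (n+1) (S ∪ S.image (· + 1))) with hT
  have himg : G.image (fun j : Fin (n+1) => (j:ℕ) + 1) = T := by
    ext t
    simp only [hG, hT, Finset.mem_image, Finset.mem_filter, Finset.mem_univ, true_and,
      Finset.mem_insert, Finset.mem_union]
    constructor
    · rintro ⟨a, ha, rfl⟩
      rcases ha with h | h | h | h
      · exact Or.inl h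
      · exact Or.inr (Or.inl h)
      · exact Or.inr (Or.inr (Or.inr ⟨(a:ℕ), h, rfl⟩))
      · exact Or.inr (Or.inr (Or.inl h))
    · rintro (rfl | rfl | h | ⟨a, ha, rfl⟩)
      · exact ⟨0, Or.inl (by simp), by simp⟩
      · refine ⟨Fin.last n, ?_, by simp⟩
        exact Or.inr (Or.inl (by simp))
      · have hb := memS h
        refine ⟨⟨t - 1, by omega⟩, ?_, by simp; omega⟩
        right; right; right
        simp only []
        rw [show (t - 1 : ℕ) + 1 = t by omega]
        exact h
      · have hb := memS ha
        refine ⟨⟨a, by omega⟩, ?_, by simp⟩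
        exact Or.inr (Or.inr (Or.inl ha))
  have hinj : Set.InjOn (fun j : Fin (n+1) => (j:ℕ) + 1) G := by
    intro a _ b _ h
    simp only at h
    exact Fin.ext (by omega)
  have hcard1 : G.card = T.card := by
    rw [← himg, Finset.card_image_of_injOn hinj]
  rw [hcard1, hT]
  have hd0 : Disjoint S (S.image (· + 1)) := by
    rw [Finset.disjoint_left]
    intro a ha hb
    simp only [Finset.mem_image] at hb
    obtain ⟨b, hb1, rfl⟩ := hb
    exact pkS_not_adjacent n τ hb1 ha
  have c1 : (S ∪ S.image (· + 1)).card = 2 * S.card := by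
    rw [Finset.card_union_of_disjoint hd0,
      Finset.card_image_of_injective _ (fun a b h => by omega)]
    omega
  have hnm1 : (n+1) ∉ S ∪ S.image (· + 1) := by
    simp only [Finset.mem_union, Finset.mem_image, not_or]
    constructor
    · intro h; have := memS h; omega
    · rintro ⟨a, ha, hc⟩; have := memS ha; omega
  have hnm2 : 1 ∉ insert (n+1) (S ∪ S.image (· + 1)) := by
    simp only [Finset.mem_insert, Finset.mem_union, Finset.mem_image, not_or]
    refine ⟨by omega, ?_, ?_⟩
    · intro h; have := memS h; omega
    · rintro ⟨a, ha, hc⟩; have := memS ha; omega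
  rw [Finset.card_insert_of_notMem hnm2, Finset.card_insert_of_notMem hnm1, c1]

lemma fact_ne (m : ℕ) : ((m.factorial : ℚ)) ≠ 0 := by
  exact_mod_cast m.factorial_ne_zero

lemma bC_id2 (k l : ℕ) :
    (2*(k:ℚ)+1) * bivariateCatalan k (l+1) = (2*(l:ℚ)+1) * bivariateCatalan (k+1) l := by
  unfold bivariateCatalan
  rw [show 2*(l+1) = (2*l+1)+1 from by ring, show 2*(k+1) = (2*k+1)+1 from by ring,
    show k + (l+1) = (k+l)+1 from by ring, show (k+1) + l = (k+l)+1 from by ring]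
  simp only [Nat.factorial_succ]
  push_cast
  field_simp
  ring

lemma bC_id1 (k l : ℕ) :
    (2*(k:ℚ)+2) * bivariateCatalan k (l+1) - (2*(l:ℚ)) * bivariateCatalan (k+1) l
      = 4 * bivariateCatalan k l := by
  unfold bivariateCatalan
  rw [show 2*(l+1) = (2*l+1)+1 from by ring, show 2*(k+1) = (2*k+1)+1 from by ring,
    show k + (l+1) = (k+l)+1 from by ring, show (k+1) + l = (k+l)+1 from by ring]
  simp only [Nat.factorial_succ]
  push_cast
  field_simp
  ring

def Fw (n k : ℕ) : ℚ := (-1 : ℚ)^k * bivariateCatalan k (n/2 - k)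

lemma step_alg (n k : ℕ) (hn : 1 ≤ n) (hk : 2*k ≤ n - 1) :
    ((2*k+2 : ℕ) : ℚ) * Fw (n+1) k + (((n+1) - (2*k+2) : ℕ) : ℚ) * Fw (n+1) (k+1)
      = 4 ^ ((n+1)/2 - n/2) * Fw n k := by
  unfold Fw
  rcases Nat.even_or_odd n with ⟨a, ha⟩ | ⟨a, ha⟩
  · -- n = 2a, a ≥ 1, k ≤ a - 1
    subst ha
    set l' := a - k - 1 with hl'
    have h1 : (a + a + 1) / 2 = a := by omega
    have h2 : (a + a) / 2 = a := by omega
    rw [h1, h2]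
    have e1 : a - k = l' + 1 := by omega
    have e2 : a - (k+1) = l' := by omega
    rw [e1, e2, Nat.sub_self, pow_zero, one_mul]
    have e3 : ((a + a + 1) - (2*k+2) : ℕ) = 2*l' + 1 := by omega
    rw [e3]
    have := bC_id2 k l'
    push_cast
    rw [pow_succ]
    linear_combination ((-1:ℚ))^k * this
  · -- n = 2a+1, k ≤ a
    subst ha
    set l := a - k with hl
    have h1 : (2*a + 1 + 1) / 2 = a + 1 := by omega
    have h2 : (2*a + 1) / 2 = a := by omega
    rw [h1, h2]
    have e1 : (a + 1) - k = l + 1 := by omega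
    have e2 : (a + 1) - (k+1) = l := by omega
    have e4 : (a + 1) - a = 1 := by omega
    rw [e1, e2, e4, pow_one]
    have e3 : ((2*a+1+1) - (2*k+2) : ℕ) = 2*l := by omega
    rw [e3]
    rw [← hl]
    have := bC_id1 k l
    push_cast
    rw [pow_succ]
    linear_combination ((-1:ℚ))^k * this

lemma interiorPeaks_eq_pkS (n : ℕ) (σ : Equiv.Perm (Fin n)) :
    interiorPeaks n σ = (pkS n σ).card := rfl

lemma pk_bound (n : ℕ) (hn : 1 ≤ n) (τ : Equiv.Perm (Fin n)) :
    2 * (pkS n τ).card ≤ n - 1 := by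
  have h := good_card n hn τ
  have h2 := Finset.card_filter_le (Finset.univ : Finset (Fin (n+1)))
    (fun j : Fin (n+1) =>
      (j:ℕ) + 1 = 1 ∨ (j:ℕ) + 1 = n + 1 ∨ (j:ℕ) ∈ pkS n τ ∨ (j:ℕ) + 1 ∈ pkS n τ)
  rw [h, Finset.card_univ, Fintype.card_fin] at h2
  omega

lemma fiber_sum (n : ℕ) (hn : 1 ≤ n) (τ : Equiv.Perm (Fin n)) :
    ∑ j : Fin (n+1), Fw (n+1) ((pkS (n+1) (ins n j τ)).card)
      = 4 ^ ((n+1)/2 - n/2) * Fw n ((pkS n τ).card) := by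
  set k := (pkS n τ).card with hk
  set P := fun j : Fin (n+1) =>
      (j:ℕ) + 1 = 1 ∨ (j:ℕ) + 1 = n + 1 ∨ (j:ℕ) ∈ pkS n τ ∨ (j:ℕ) + 1 ∈ pkS n τ with hP
  have hval : ∀ j : Fin (n+1),
      Fw (n+1) ((pkS (n+1) (ins n j τ)).card) = if P j then Fw (n+1) k else Fw (n+1) (k+1) := by
    intro j
    rw [pkS_ins_card]
    by_cases h : P j
    · rw [if_pos h, if_pos h]
    · rw [if_neg h, if_neg h]
  calc ∑ j : Fin (n+1), Fw (n+1) ((pkS (n+1) (ins n j τ)).card)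
      = ∑ j : Fin (n+1), (if P j then Fw (n+1) k else Fw (n+1) (k+1)) := by
        exact Finset.sum_congr rfl (fun j _ => hval j)
    _ = ((2*k+2 : ℕ) : ℚ) * Fw (n+1) k + (((n+1) - (2*k+2) : ℕ) : ℚ) * Fw (n+1) (k+1) := by
        rw [Finset.sum_ite, Finset.sum_const, Finset.sum_const]
        have hc1 : (Finset.univ.filter P).card = 2*k+2 := good_card n hn τ
        have hc2 : (Finset.univ.filter (fun j => ¬ P j)).card = (n+1) - (2*k+2) := by
          have := Finset.card_filter_add_card_filter_not (s := (Finset.univ : Finset (Fin (n+1)))) (p := P)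
          rw [hc1] at this
          simp only [Finset.card_univ, Fintype.card_fin] at this
          omega
        rw [hc1, hc2]
        simp [nsmul_eq_mul]
    _ = 4 ^ ((n+1)/2 - n/2) * Fw n k := step_alg n k hn (pk_bound n hn τ)

lemma main_sum (n : ℕ) :
    ∑ σ : Equiv.Perm (Fin n), Fw n (interiorPeaks n σ) = 4 ^ (n / 2) := by
  induction n with
  | zero =>
      have h0 : ∀ σ : Equiv.Perm (Fin 0), interiorPeaks 0 σ = 0 := by
        intro σ; simp [interiorPeaks]
      rw [Finset.sum_congr rfl (fun σ _ => by rw [h0 σ])]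
      rw [Finset.sum_const, Finset.card_univ]
      simp [Fw, bivariateCatalan]
  | succ n ih =>
      rcases Nat.eq_zero_or_pos n with rfl | hn
      · have h0 : ∀ σ : Equiv.Perm (Fin 1), interiorPeaks 1 σ = 0 := by
          intro σ; simp [interiorPeaks]
        rw [Finset.sum_congr rfl (fun σ _ => by rw [h0 σ])]
        rw [Finset.sum_const, Finset.card_univ]
        simp [Fw, bivariateCatalan]
      · have htrans : ∑ σ : Equiv.Perm (Fin (n+1)), Fw (n+1) (interiorPeaks (n+1) σ)
            = ∑ x : Fin (n+1) × Equiv.Perm (Fin n), Fw (n+1) (interiorPeaks (n+1) (ins n x.1 x.2)) := by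
          exact (Fintype.sum_bijective _ (ins_bijective n)
            (fun x => Fw (n+1) (interiorPeaks (n+1) (ins n x.1 x.2)))
            (fun σ => Fw (n+1) (interiorPeaks (n+1) σ)) (fun x => rfl)).symm
        rw [htrans, Fintype.sum_prod_type]
        rw [Finset.sum_comm]
        have : ∀ τ : Equiv.Perm (Fin n),
            ∑ j : Fin (n+1), Fw (n+1) (interiorPeaks (n+1) (ins n j τ))
              = 4 ^ ((n+1)/2 - n/2) * Fw n ((pkS n τ).card) := by
          intro τ
          simp only [interiorPeaks_eq_pkS]
          exact fiber_sum n hn τ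
        rw [Finset.sum_congr rfl (fun τ _ => this τ), ← Finset.mul_sum]
        have hsum : ∑ τ : Equiv.Perm (Fin n), Fw n ((pkS n τ).card) = 4 ^ (n/2) := by
          rw [← ih]
          exact Finset.sum_congr rfl (fun τ _ => by rw [interiorPeaks_eq_pkS])
        rw [hsum, ← pow_add]
        congr 1
        have : n/2 ≤ (n+1)/2 := Nat.div_le_div_right (Nat.le_succ n)
        omega

theorem interior_peaks_bivariate_catalan_sum (n : ℕ) :
    ∑ σ : Equiv.Perm (Fin n),
      (-1 : ℚ) ^ interiorPeaks n σ
        * bivariateCatalan (interiorPeaks n σ) (n / 2 - interiorPeaks n σ)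
    = 4 ^ (n / 2) := by
  exact main_sum n
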